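/- Let n ≥ 1 and 1 ≤ m ≤ n, let s ≥ m, and let μ_{2n,m} be the unique U(n)-invariant Borel probability measure on G_h(2n,m). For every R > 0 there exists a constant C = C(R,n,m,s) > 0 such that for every Borel set A ⊆ ℝ^{2n} the double upper integral satisfies ∫_{ℝ^{2n}} ∫_{G_h(2n,m)} H^{s−m}[A ∩ (V^⊥ + x)] · 1_{N(V,R)}(x) dμ_{2n,m}(V) dx ≤ C H^s(A), where N(V,R) = {y ∈ ℝ^{2n} : dist(y,V) ≤ R} is the Euclidean R-neighborhood of V and dx is Lebesgue measure on ℝ^{2n}. -/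

import Mathlib

open MeasureTheory Module Metric Set
open scoped ENNReal NNReal Real

open Filter
open scoped Topology RealInnerProductSpace

noncomputable section

/-- Euclidean space `ℝ^{2n}`. -/
abbrev E (n : ℕ) : Type := EuclideanSpace ℝ (Fin (2 * n))

/-- The standard symplectic form `ω((x,y),(u,v)) = x·v − y·u` on `ℝ^{2n}`. -/
def symp (n : ℕ) (x y : E n) : ℝ :=
  ∑ i : Fin n, (x ⟨i.1, by have := i.2; omega⟩ * y ⟨i.1 + n, by have := i.2; omega⟩ -
    x ⟨i.1 + n, by have := i.2; omega⟩ * y ⟨i.1, by have := i.2; omega⟩)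

/-- A linear subspace of `ℝ^{2n}` is isotropic if the symplectic form vanishes on it. -/
def IsIsotropic (n : ℕ) (V : Submodule ℝ (E n)) : Prop :=
  ∀ v ∈ V, ∀ w ∈ V, symp n v w = 0

/-- The orthogonal projection onto a subspace, as a continuous linear endomorphism. -/
def projCLM (n : ℕ) (V : Submodule ℝ (E n)) : E n →L[ℝ] E n :=
  V.subtypeL.comp V.orthogonalProjectionOnto

/-- The isotropic Grassmannian `G_h(2n,m)`, realized as the set of orthogonal projection
operators onto `m`-dimensional isotropic subspaces, inside the continuous linear
endomorphisms of `ℝ^{2n}`.  For `P` in this set, the corresponding plane `V` is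
`LinearMap.range P` and the orthogonal projection `P_V` is `P` itself. -/
def grass (n m : ℕ) : Set (E n →L[ℝ] E n) :=
  {P | ∃ V : Submodule ℝ (E n), IsIsotropic n V ∧ finrank ℝ V = m ∧ P = projCLM n V}

/-- Membership in `U(n)`: a linear isometry of `ℝ^{2n}` preserving the symplectic form. -/
def IsUnitary (n : ℕ) (g : E n ≃ₗᵢ[ℝ] E n) : Prop :=
  ∀ x y, symp n (g x) (g y) = symp n x y

/-- The action of an isometry on projection operators: `P ↦ g ∘ P ∘ g⁻¹`. -/
def conjAct (n : ℕ) (g : E n ≃ₗᵢ[ℝ] E n) (P : E n →L[ℝ] E n) : E n →L[ℝ] E n :=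
  (g.toLinearIsometry.toContinuousLinearMap.comp P).comp
    g.symm.toLinearIsometry.toContinuousLinearMap

/-- `ν` is a `U(n)`-invariant Borel probability measure `μ_{2n,m}` on `G_h(2n,m)`:
a Borel measure on the space of operators giving full mass to the isotropic
Grassmannian and invariant under the conjugation action of the unitary group.
(Probability is imposed via an `IsProbabilityMeasure` instance.) -/
def IsGrassMeasure (n m : ℕ) (ν : Measure (E n →L[ℝ] E n)) : Prop :=
  ν (grass n m) = 1 ∧
    ∀ g : E n ≃ₗᵢ[ℝ] E n, IsUnitary n g → Measure.map (conjAct n g) ν = ν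

section Aux

variable {n m : ℕ}

lemma projCLM_apply (V : Submodule ℝ (E n)) (x : E n) :
    projCLM n V x = ↑(V.orthogonalProjectionOnto x) := rfl

lemma projCLM_mem (V : Submodule ℝ (E n)) (x : E n) : projCLM n V x ∈ V :=
  SetLike.coe_mem _

lemma projCLM_of_mem {V : Submodule ℝ (E n)} {x : E n} (h : x ∈ V) :
    projCLM n V x = x := by
  rw [projCLM_apply, ← Submodule.starProjection_apply, Submodule.starProjection_eq_self_iff.2 h]

lemma range_projCLM (V : Submodule ℝ (E n)) :
    LinearMap.range (projCLM n V : E n →ₗ[ℝ] E n) = V := by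
  ext z
  constructor
  · rintro ⟨w, rfl⟩; exact projCLM_mem V w
  · intro hz; exact ⟨z, projCLM_of_mem hz⟩

lemma sub_projCLM_mem_orthogonal (V : Submodule ℝ (E n)) (x : E n) :
    x - projCLM n V x ∈ Vᗮ :=
  Submodule.sub_starProjection_mem_orthogonal (K := V) x

lemma norm_projCLM_le (V : Submodule ℝ (E n)) (x : E n) :
    ‖projCLM n V x‖ ≤ ‖x‖ := by
  rw [projCLM_apply]
  simpa using (V.orthogonalProjectionOnto).le_of_opNorm_le (Submodule.orthogonalProjectionOnto_norm_le V) x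

lemma norm_sub_projCLM (V : Submodule ℝ (E n)) (x : E n) :
    ‖x - projCLM n V x‖ = infDist x (V : Set (E n)) := by
  rw [projCLM_apply, ← Submodule.starProjection_apply, Submodule.starProjection_minimal, Metric.infDist_eq_iInf]
  simp_rw [dist_eq_norm]
  rfl

lemma card_filter_fin_lt {N : ℕ} (h : m ≤ N) :
    (Finset.univ.filter (fun i : Fin N => (i : ℕ) < m)).card = m := by
  have : (Finset.univ.filter (fun i : Fin N => (i : ℕ) < m)) =
      Finset.map (Fin.castLEEmb h) Finset.univ := by
    ext i
    simp only [Finset.mem_filter, Finset.mem_univ, true_and, Finset.mem_map,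
      Fin.castLEEmb_apply]
    constructor
    · intro hi; exact ⟨⟨(i : ℕ), hi⟩, by ext; simp⟩
    · rintro ⟨j, rfl⟩; simpa using j.2
  rw [this, Finset.card_map, Finset.card_univ, Fintype.card_fin]

lemma exists_adapted_basis (V : Submodule ℝ (E n)) (hV : finrank ℝ V = m) (hm2n : m ≤ 2 * n) :
    ∃ b : OrthonormalBasis (Fin (2 * n)) ℝ (E n),
      (∀ i : Fin (2 * n), (i : ℕ) < m → (b i : E n) ∈ V) ∧
      (∀ i : Fin (2 * n), ¬ ((i : ℕ) < m) → (b i : E n) ∈ Vᗮ) := by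
  have o : OrthonormalBasis (Fin m) ℝ V :=
    (stdOrthonormalBasis ℝ V).reindex (finCongr hV)
  set v : Fin (2 * n) → E n := fun i => if h : (i : ℕ) < m then (o ⟨(i : ℕ), h⟩ : E n) else 0
    with hv_def
  have hcard : finrank ℝ (E n) = Fintype.card (Fin (2 * n)) := by
    simp [finrank_euclideanSpace_fin]
  set s : Set (Fin (2 * n)) := {i | (i : ℕ) < m} with hs_def
  have hon : Orthonormal ℝ (s.restrict v) := by
    have h1 : Orthonormal ℝ (fun j : Fin m => (o j : E n)) :=
      o.orthonormal.comp_linearIsometry V.subtypeₗᵢ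
    have h2 : s.restrict v =
        (fun j : Fin m => (o j : E n)) ∘ (fun i : s => (⟨(i : ℕ), i.2⟩ : Fin m)) := by
      funext i
      simp only [Set.restrict_apply, Function.comp_apply, hv_def]
      exact dif_pos (show ((i : Fin (2*n)) : ℕ) < m from i.2)
    rw [h2]
    exact h1.comp _ (fun a b hab => by
      apply Subtype.ext; apply Fin.ext
      simpa using congrArg Fin.val hab)
  obtain ⟨b, hb⟩ := hon.exists_orthonormalBasis_extension_of_card_eq hcard
  refine ⟨b, fun i hi => ?_, fun i hi => ?_⟩
  · rw [hb i hi]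
    simp only [hv_def, dif_pos hi]
    exact SetLike.coe_mem _
  · rw [Submodule.mem_orthogonal]
    intro u hu
    have hrep : (u : E n) = ∑ j : Fin m, o.repr ⟨u, hu⟩ j • (o j : E n) := by
      have := o.sum_repr ⟨u, hu⟩
      calc (u : E n) = ((⟨u, hu⟩ : V) : E n) := rfl
        _ = ((∑ j, o.repr ⟨u, hu⟩ j • o j : V) : E n) := by rw [this]
        _ = ∑ j : Fin m, o.repr ⟨u, hu⟩ j • (o j : E n) := by
            push_cast; rfl
    rw [hrep, sum_inner]
    refine Finset.sum_eq_zero fun j _ => ?_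
    rw [real_inner_smul_left]
    have hj : (⟨(j : ℕ), lt_of_lt_of_le j.2 hm2n⟩ : Fin (2 * n)) ∈ s := j.2
    have hoj : (o j : E n) = b ⟨(j : ℕ), lt_of_lt_of_le j.2 hm2n⟩ := by
      rw [hb _ hj]
      simp only [hv_def]
      rw [dif_pos (show ((⟨(j : ℕ), lt_of_lt_of_le j.2 hm2n⟩ : Fin (2*n)) : ℕ) < m from j.2)]
    have hne : (⟨(j : ℕ), lt_of_lt_of_le j.2 hm2n⟩ : Fin (2 * n)) ≠ i := by
      intro hEq
      apply hi
      rw [← hEq]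
      exact j.2
    rw [hoj, b.orthonormal.2 hne, mul_zero]

lemma vol_bound (V : Submodule ℝ (E n)) (hV : finrank ℝ V = m) (hm2n : m ≤ 2 * n)
    (t : Set (E n)) (hdne : EMetric.diam t ≠ ∞) {R : ℝ} :
    volume {x : E n | projCLM n V x ∈ projCLM n V '' t ∧ ‖x - projCLM n V x‖ ≤ R}
      ≤ (2 * EMetric.diam t) ^ m * (ENNReal.ofReal (2 * R)) ^ (2 * n - m) := by
  rcases t.eq_empty_or_nonempty with rfl | ⟨y0, hy0⟩
  · simp
  · obtain ⟨b, hbV, hbVp⟩ := exists_adapted_basis V hV hm2n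
    set P := projCLM n V with hP
    set d := Metric.diam t with hd
    have hd0 : 0 ≤ d := Metric.diam_nonneg
    have hbnd : Bornology.IsBounded t := by
      rw [Metric.isBounded_iff_ediam_ne_top]; exact hdne
    set g : Fin (2 * n) → Set ℝ := fun i =>
      if (i : ℕ) < m then Icc (⟪b i, P y0⟫ - d) (⟪b i, P y0⟫ + d) else Icc (-R) R with hg
    have hsub : {x : E n | P x ∈ P '' t ∧ ‖x - P x‖ ≤ R} ⊆
        (fun x : E n => (MeasurableEquiv.toLp 2 (Fin (2 * n) → ℝ)).symm (b.repr x)) ⁻¹'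
          (Set.univ.pi g) := by
      rintro x ⟨⟨y1, hy1, hPy1⟩, hxR⟩
      rw [Set.mem_preimage, Set.mem_univ_pi]
      intro i
      have happ : (MeasurableEquiv.toLp 2 (Fin (2 * n) → ℝ)).symm (b.repr x) i = ⟪b i, x⟫ := by
        rw [← b.repr_apply_apply]; rfl
      rw [happ]
      by_cases him : (i : ℕ) < m
      · simp only [hg, if_pos him, Set.mem_Icc]
        have h0 : ⟪b i, x - P x⟫ = 0 :=
          (Submodule.mem_orthogonal V _).1 (sub_projCLM_mem_orthogonal V x) (b i) (hbV i him)
        have h1 : ⟪b i, x⟫ = ⟪b i, P x⟫ := by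
          have := inner_sub_right (𝕜 := ℝ) (b i) x (P x)
          rw [h0] at this; linarith
        have h2 : |⟪b i, P x⟫ - ⟪b i, P y0⟫| ≤ d := by
          rw [← inner_sub_right]
          calc |⟪b i, P x - P y0⟫| ≤ ‖b i‖ * ‖P x - P y0‖ := abs_real_inner_le_norm _ _
            _ = ‖P x - P y0‖ := by rw [b.orthonormal.1 i, one_mul]
            _ = ‖P (y1 - y0)‖ := by rw [← hPy1, map_sub]
            _ ≤ ‖y1 - y0‖ := norm_projCLM_le V _
            _ = dist y1 y0 := (dist_eq_norm _ _).symm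
            _ ≤ d := Metric.dist_le_diam_of_mem hbnd hy1 hy0
        rw [h1]
        rw [abs_sub_le_iff] at h2
        constructor <;> linarith [h2.1, h2.2]
      · simp only [hg, if_neg him, Set.mem_Icc]
        have h0 : ⟪P x, b i⟫ = 0 :=
          (Submodule.mem_orthogonal V _).1 (hbVp i him) (P x) (projCLM_mem V x)
        have h1 : ⟪b i, x⟫ = ⟪b i, x - P x⟫ := by
          have h0' : ⟪b i, P x⟫ = 0 := by rw [real_inner_comm]; exact h0
          have := inner_sub_right (𝕜 := ℝ) (b i) x (P x)
          rw [h0'] at this; linarith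
        have h2 : |⟪b i, x - P x⟫| ≤ R := by
          calc |⟪b i, x - P x⟫| ≤ ‖b i‖ * ‖x - P x‖ := abs_real_inner_le_norm _ _
            _ = ‖x - P x‖ := by rw [b.orthonormal.1 i, one_mul]
            _ ≤ R := hxR
        rw [h1]
        rw [abs_le] at h2
        exact h2
    have hmp : MeasurePreserving
        (fun x : E n => (MeasurableEquiv.toLp 2 (Fin (2 * n) → ℝ)).symm (b.repr x))
        volume volume :=
      (EuclideanSpace.volume_preserving_symm_measurableEquiv_toLp _).comp b.measurePreserving_repr
    have hpimeas : MeasurableSet (Set.univ.pi g) :=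
      MeasurableSet.univ_pi (fun i => by
        by_cases him : (i : ℕ) < m <;> simp [hg, him, measurableSet_Icc])
    calc volume {x : E n | P x ∈ P '' t ∧ ‖x - P x‖ ≤ R}
        ≤ volume ((fun x : E n => (MeasurableEquiv.toLp 2 (Fin (2 * n) → ℝ)).symm (b.repr x)) ⁻¹'
          (Set.univ.pi g)) := measure_mono hsub
      _ = volume (Set.univ.pi g) := hmp.measure_preimage hpimeas.nullMeasurableSet
      _ = ∏ i, volume (g i) := volume_pi_pi g
      _ = (ENNReal.ofReal (2 * d)) ^ m * (ENNReal.ofReal (2 * R)) ^ (2 * n - m) := by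
          have hvol : ∀ i : Fin (2 * n), volume (g i) =
              if (i : ℕ) < m then ENNReal.ofReal (2 * d) else ENNReal.ofReal (2 * R) := by
            intro i
            by_cases him : (i : ℕ) < m
            · simp only [hg, if_pos him, Real.volume_Icc]
              congr 1; ring
            · simp only [hg, if_neg him, Real.volume_Icc]
              congr 1; ring
          simp_rw [hvol]
          rw [Finset.prod_ite, Finset.prod_const, Finset.prod_const, card_filter_fin_lt hm2n]
          congr 2
          have := Finset.card_filter_add_card_filter_not
            (s := (Finset.univ : Finset (Fin (2 * n)))) (p := fun i => (i : ℕ) < m)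
          rw [card_filter_fin_lt hm2n] at this
          simp only [Finset.card_univ, Fintype.card_fin] at this
          omega
      _ ≤ (2 * EMetric.diam t) ^ m * (ENNReal.ofReal (2 * R)) ^ (2 * n - m) := by
          gcongr
          rw [ENNReal.ofReal_mul (by norm_num : (0:ℝ) ≤ 2)]
          rw [hd, Metric.diam, ENNReal.ofReal_toReal (a := Metric.ediam t) hdne]
          show _ ≤ 2 * Metric.ediam t
          simp

lemma sfinite_restrict {α : Type*} [MeasurableSpace α] (ν : Measure α)
    [IsProbabilityMeasure ν] (g : Set α) : SFinite (ν.restrict g) := inferInstance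

lemma isfinite_restrict {α : Type*} [MeasurableSpace α] (ν : Measure α)
    [IsProbabilityMeasure ν] (g : Set α) : IsFiniteMeasure (ν.restrict g) := inferInstance

lemma slice_liminf_le {X : Type*} [EMetricSpace X] [MeasurableSpace X] [BorelSpace X]
    (B : Set X) (d : ℝ) (T : ℕ → ℕ → Set X) (hcov : ∀ k, B ⊆ ⋃ i, T k i)
    (hdiam : ∀ k i, EMetric.diam (T k i) ≤ ((k : ℝ≥0∞) + 1)⁻¹) :
    μH[d] B ≤ liminf (fun k => ∑' i, ⨆ _ : (T k i).Nonempty, EMetric.diam (T k i) ^ d) atTop := by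
  rw [MeasureTheory.Measure.hausdorffMeasure_apply]
  refine iSup₂_le fun r hr => ?_
  obtain ⟨k0, hk0⟩ := ENNReal.exists_inv_nat_lt hr.ne'
  refine Filter.le_liminf_of_le (by isBoundedDefault) ?_
  filter_upwards [Filter.eventually_ge_atTop k0] with k hk
  have h1 : ∀ i, EMetric.diam (T k i) ≤ r := by
    intro i
    refine (hdiam k i).trans (le_trans ?_ hk0.le)
    rw [ENNReal.inv_le_inv]
    exact_mod_cast Nat.le_succ_of_le hk
  exact le_trans (iInf_le _ (T k)) (le_trans (iInf_le _ (hcov k)) (iInf_le _ h1))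

lemma S_isClosed (t : Set (E n)) (ht : IsCompact t) (R : ℝ) :
    IsClosed {p : E n × (E n →L[ℝ] E n) | p.2 p.1 ∈ p.2 '' t ∧ ‖p.1 - p.2 p.1‖ ≤ R} := by
  have happ : Continuous fun z : (E n →L[ℝ] E n) × E n => z.1 z.2 :=
    isBoundedBilinearMap_apply.continuous
  refine IsSeqClosed.isClosed ?_
  intro p q hmem hconv
  have hx : Tendsto (fun j => (p j).1) atTop (𝓝 q.1) := (continuous_fst.tendsto q).comp hconv
  have hP : Tendsto (fun j => (p j).2) atTop (𝓝 q.2) := (continuous_snd.tendsto q).comp hconv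
  have hPx : Tendsto (fun j => (p j).2 (p j).1) atTop (𝓝 (q.2 q.1)) :=
    happ.tendsto (q.2, q.1) |>.comp (hP.prodMk_nhds hx)
  have hmem1 := fun j => (hmem j).1
  choose y hyt hPy using fun j => (Set.mem_image _ _ _).1 (hmem1 j)
  obtain ⟨yl, hylt, φ, hφ, hyconv⟩ := ht.tendsto_subseq hyt
  constructor
  · rw [Set.mem_image]
    refine ⟨yl, hylt, ?_⟩
    have t1 : Tendsto (fun j => (p (φ j)).2 (y (φ j))) atTop (𝓝 (q.2 yl)) :=
      (happ.tendsto (q.2, yl)).comp ((hP.comp hφ.tendsto_atTop).prodMk_nhds hyconv)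
    have t2 : Tendsto (fun j => (p (φ j)).2 (y (φ j))) atTop (𝓝 (q.2 q.1)) := by
      have := hPx.comp hφ.tendsto_atTop
      refine this.congr fun j => ?_
      exact (hPy (φ j)).symm
    exact tendsto_nhds_unique t1 t2
  · have hnrm : Tendsto (fun j => ‖(p j).1 - (p j).2 (p j).1‖) atTop (𝓝 ‖q.1 - q.2 q.1‖) :=
      (hx.sub hPx).norm
    exact le_of_tendsto hnrm (Filter.Eventually.of_forall fun j => (hmem j).2)

end Aux

/-- For every `R > 0` there is `C = C(R,n,m,s) > 0` such that for every Borel `A ⊆ ℝ^{2n}`,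
`∫_{ℝ^{2n}} ∫_{G_h(2n,m)} H^{s−m}[A ∩ (V^⊥ + x)]·1_{N(V,R)}(x) dμ_{2n,m}(V) dx ≤ C H^s(A)`,
where `N(V,R)` is the Euclidean `R`-neighborhood of `V`. -/
theorem stmt12 (n m : ℕ) (hn : 1 ≤ n) (hm : 1 ≤ m) (hmn : m ≤ n)
    (s : ℝ) (hs : (m : ℝ) ≤ s)
    (ν : Measure (E n →L[ℝ] E n)) [IsProbabilityMeasure ν] (hν : IsGrassMeasure n m ν)
    (R : ℝ) (hR : 0 < R) :
    ∃ C : ℝ, 0 < C ∧ ∀ A : Set (E n), MeasurableSet A →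
      ∫⁻ x, (∫⁻ P in grass n m,
          (if Metric.infDist x (LinearMap.range (P : E n →ₗ[ℝ] E n) : Set (E n)) ≤ R then
            μH[s - m] (A ∩ {y : E n | y - x ∈ (LinearMap.range (P : E n →ₗ[ℝ] E n))ᗮ}) else 0) ∂ν)
        ≤ ENNReal.ofReal C * μH[s] A := by
  classical
  have hm2n : m ≤ 2 * n := le_trans hmn (by omega)
  refine ⟨2 ^ m * (2 * R) ^ (2 * n - m), by positivity, ?_⟩
  intro A _hA
  set K : ℝ≥0∞ := 2 ^ m * (ENNReal.ofReal (2 * R)) ^ (2 * n - m) with hKdef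
  have hKofReal : ENNReal.ofReal (2 ^ m * (2 * R) ^ (2 * n - m)) = K := by
    rw [ENNReal.ofReal_mul (by positivity), ENNReal.ofReal_pow (by norm_num),
      ENNReal.ofReal_pow (by positivity), ENNReal.ofReal_ofNat]
  have hKne : K ≠ ∞ :=
    ENNReal.mul_ne_top (ENNReal.pow_ne_top (by norm_num))
      (ENNReal.pow_ne_top ENNReal.ofReal_ne_top)
  have hKne0 : K ≠ 0 := by
    rw [← hKofReal]
    simp only [ne_eq, ENNReal.ofReal_eq_zero, not_le]
    positivity
  rw [hKofReal]
  set H := μH[s] A with hHdef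
  by_cases hHtop : H = ∞
  · rw [hHtop, ENNReal.mul_top hKne0]
    exact le_top
  -- construct good covers of A
  have hcovers : ∀ k : ℕ, ∃ T : ℕ → Set (E n), (A ⊆ ⋃ i, T i) ∧ (∀ i, IsClosed (T i)) ∧
      (∀ i, EMetric.diam (T i) ≤ ((k : ℝ≥0∞) + 1)⁻¹) ∧
      (∑' i, ⨆ _ : (T i).Nonempty, EMetric.diam (T i) ^ s) ≤ H + ((k : ℝ≥0∞) + 1)⁻¹ := by
    intro k
    have hne1 : ((k : ℝ≥0∞) + 1) ≠ ∞ := by simp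
    have hpos : (0:ℝ≥0∞) < ((k : ℝ≥0∞) + 1)⁻¹ := ENNReal.inv_pos.2 hne1
    have hle : (⨅ (t : ℕ → Set (E n)) (_ : A ⊆ ⋃ i, t i)
        (_ : ∀ i, EMetric.diam (t i) ≤ ((k : ℝ≥0∞) + 1)⁻¹),
        ∑' i, ⨆ _ : (t i).Nonempty, EMetric.diam (t i) ^ s) ≤ H := by
      rw [hHdef, MeasureTheory.Measure.hausdorffMeasure_apply]
      exact le_iSup₂ (f := fun (r : ℝ≥0∞) (_ : 0 < r) =>
        ⨅ (t : ℕ → Set (E n)) (_ : A ⊆ ⋃ i, t i) (_ : ∀ i, EMetric.diam (t i) ≤ r),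
          ∑' i, ⨆ _ : (t i).Nonempty, EMetric.diam (t i) ^ s) _ hpos
    have hlt := hle.trans_lt (ENNReal.lt_add_right hHtop hpos.ne')
    rw [iInf_lt_iff] at hlt; obtain ⟨t0, hlt⟩ := hlt
    rw [iInf_lt_iff] at hlt; obtain ⟨hcov0, hlt⟩ := hlt
    rw [iInf_lt_iff] at hlt; obtain ⟨hdiam0, hlt⟩ := hlt
    refine ⟨fun i => closure (t0 i), ?_, fun i => isClosed_closure, fun i => ?_, ?_⟩
    · exact hcov0.trans (Set.iUnion_mono fun i => subset_closure)
    · exact (Metric.ediam_closure (t0 i)).trans_le (hdiam0 i)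
    · refine le_trans (le_of_eq ?_) hlt.le
      congr 1; funext i
      simp only [EMetric.diam_closure, closure_nonempty_iff]
      rw [show EMetric.diam (closure (t0 i)) = EMetric.diam (t0 i) from Metric.ediam_closure _]
  choose T hTcov hTclosed hTdiam hTsum using hcovers
  have hTdne : ∀ k i, EMetric.diam (T k i) ≠ ∞ := fun k i =>
    ((hTdiam k i).trans_lt (ENNReal.inv_lt_top.2 (lt_of_lt_of_le zero_lt_one le_add_self))).ne
  have hTcpt : ∀ k i, IsCompact (T k i) := fun k i =>
    Metric.isCompact_of_isClosed_isBounded (hTclosed k i)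
      (Metric.isBounded_iff_ediam_ne_top.2 (hTdne k i))
  set S : ℕ → ℕ → Set ((E n) × (E n →L[ℝ] E n)) := fun k i =>
    {p | p.2 p.1 ∈ p.2 '' (T k i) ∧ ‖p.1 - p.2 p.1‖ ≤ R} with hSdef
  have hSmeas : ∀ k i, MeasurableSet (S k i) := fun k i =>
    (S_isClosed (T k i) (hTcpt k i) R).measurableSet
  set w : ℕ → ℕ → ℝ≥0∞ := fun k i => EMetric.diam (T k i) ^ (s - m) with hwdef
  set ν' := ν.restrict (grass n m) with hν'def
  haveI : IsFiniteMeasure ν' := by rw [hν'def]; exact isfinite_restrict ν _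
  haveI : SFinite ν' := by rw [hν'def]; exact sfinite_restrict ν _
  -- the pointwise bound on the Grassmannian
  have key : ∀ x : E n, ∀ P ∈ grass n m,
      (if Metric.infDist x (LinearMap.range (P : E n →ₗ[ℝ] E n) : Set (E n)) ≤ R then
        μH[s - m] (A ∩ {y : E n | y - x ∈ (LinearMap.range (P : E n →ₗ[ℝ] E n))ᗮ}) else 0)
      ≤ liminf (fun k => ∑' i, w k i * (S k i).indicator 1 (x, P)) atTop := by
    rintro x P ⟨V, -, hVrank, rfl⟩
    rw [range_projCLM]
    by_cases hdist : Metric.infDist x (V : Set (E n)) ≤ R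
    swap
    · rw [if_neg hdist]; exact zero_le
    rw [if_pos hdist]
    set L := {y : E n | y - x ∈ Vᗮ} with hLdef
    have h1 : μH[s - m] (A ∩ L) ≤ liminf
        (fun k => ∑' i, ⨆ _ : ((T k i ∩ L)).Nonempty, EMetric.diam (T k i ∩ L) ^ (s - m))
        atTop := by
      refine slice_liminf_le (A ∩ L) (s - m) (fun k i => T k i ∩ L) (fun k => ?_)
        (fun k i => le_trans (EMetric.diam_mono inter_subset_left) (hTdiam k i))
      intro z hz
      rcases Set.mem_iUnion.1 (hTcov k hz.1) with ⟨i, hzi⟩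
      exact Set.mem_iUnion.2 ⟨i, hzi, hz.2⟩
    refine h1.trans (Filter.liminf_le_liminf (Filter.Eventually.of_forall fun k => ?_))
    refine ENNReal.tsum_le_tsum fun i => ?_
    rcases (T k i ∩ L).eq_empty_or_nonempty with he | hne
    · rw [he]; simp
    · obtain ⟨y, hyT, hyL⟩ := hne
      have hmemS : (x, projCLM n V) ∈ S k i := by
        constructor
        · refine ⟨y, hyT, ?_⟩
          have h0 : projCLM n V (y - x) = 0 := by
            rw [projCLM_apply,
              Submodule.orthogonalProjectionOnto_apply_of_mem_orthogonal hyL,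
              Submodule.coe_zero]
          rw [map_sub] at h0
          exact sub_eq_zero.1 h0
        · rw [norm_sub_projCLM]; exact hdist
      calc (⨆ _ : (T k i ∩ L).Nonempty, EMetric.diam (T k i ∩ L) ^ (s - (m:ℝ)))
          ≤ EMetric.diam (T k i) ^ (s - (m:ℝ)) :=
            iSup_le fun _ => ENNReal.rpow_le_rpow (EMetric.diam_mono inter_subset_left)
              (by linarith)
        _ = w k i * (S k i).indicator 1 (x, projCLM n V) := by
            rw [Set.indicator_of_mem hmemS, hwdef, Pi.one_apply, mul_one]
  -- measurability of the dominating function in P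
  have hgmeasP : ∀ x : E n, Measurable fun P : E n →L[ℝ] E n =>
      liminf (fun k => ∑' i, w k i * (S k i).indicator 1 (x, P)) atTop := by
    intro x
    refine Measurable.liminf fun k => Measurable.ennreal_tsum fun i => ?_
    exact ((measurable_one.indicator (hSmeas k i)).comp measurable_prodMk_left).const_mul _
  have step1 : ∀ x : E n, (∫⁻ P in grass n m,
      (if Metric.infDist x (LinearMap.range (P : E n →ₗ[ℝ] E n) : Set (E n)) ≤ R then
        μH[s - m] (A ∩ {y : E n | y - x ∈ (LinearMap.range (P : E n →ₗ[ℝ] E n))ᗮ}) else 0) ∂ν)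
      ≤ ∫⁻ P, liminf (fun k => ∑' i, w k i * (S k i).indicator 1 (x, P)) atTop ∂ν' :=
    fun x => setLIntegral_mono (hgmeasP x) (key x)
  have hsecmeasP : ∀ (k i : ℕ) (x : E n), MeasurableSet (Prod.mk x ⁻¹' S k i) := fun k i x =>
    (hSmeas k i).preimage measurable_prodMk_left
  have step2 : ∀ x : E n,
      (∫⁻ P, liminf (fun k => ∑' i, w k i * (S k i).indicator 1 (x, P)) atTop ∂ν')
      ≤ liminf (fun k => ∑' i, w k i * ν' (Prod.mk x ⁻¹' S k i)) atTop := by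
    intro x
    refine le_trans (lintegral_liminf_le fun k => Measurable.ennreal_tsum fun i =>
      ((measurable_one.indicator (hSmeas k i)).comp measurable_prodMk_left).const_mul _) ?_
    refine Filter.liminf_le_liminf (Filter.Eventually.of_forall fun k => le_of_eq ?_)
    have haemeas : ∀ i : ℕ, AEMeasurable
        (fun P : E n →L[ℝ] E n => w k i * (S k i).indicator 1 (x, P)) ν' := by
      intro i
      have hmi : Measurable fun P : E n →L[ℝ] E n =>
          (S k i).indicator (1 : E n × (E n →L[ℝ] E n) → ℝ≥0∞) (x, P) :=
        (measurable_one.indicator (hSmeas k i)).comp measurable_prodMk_left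
      exact (hmi.const_mul _).aemeasurable
    rw [lintegral_tsum haemeas]
    refine tsum_congr fun i => ?_
    have hmi : Measurable fun P : E n →L[ℝ] E n =>
        (S k i).indicator (1 : E n × (E n →L[ℝ] E n) → ℝ≥0∞) (x, P) :=
      (measurable_one.indicator (hSmeas k i)).comp measurable_prodMk_left
    rw [lintegral_const_mul _ hmi]
    congr 1
    have heq : (fun P : E n →L[ℝ] E n => (S k i).indicator 1 (x, P))
        = (Prod.mk x ⁻¹' S k i).indicator (1 : (E n →L[ℝ] E n) → ℝ≥0∞) := by
      funext P
      by_cases h : (x, P) ∈ S k i <;>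
        simp [Set.indicator_apply, Set.mem_preimage, h]
    rw [heq, lintegral_indicator_one (hsecmeasP k i x)]
  -- the bound for fixed k
  have boundk : ∀ k : ℕ, (∫⁻ x, ∑' i, w k i * ν' (Prod.mk x ⁻¹' S k i))
      ≤ K * (H + ((k : ℝ≥0∞) + 1)⁻¹) := by
    intro k
    have haemeas : ∀ i : ℕ, AEMeasurable
        (fun x : E n => w k i * ν' (Prod.mk x ⁻¹' S k i)) volume := fun i =>
      ((measurable_measure_prodMk_left (hSmeas k i)).const_mul _).aemeasurable
    rw [lintegral_tsum haemeas]
    have per_i : ∀ i, (∫⁻ x, w k i * ν' (Prod.mk x ⁻¹' S k i))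
        ≤ K * ⨆ _ : (T k i).Nonempty, EMetric.diam (T k i) ^ s := by
      intro i
      rw [lintegral_const_mul _ (measurable_measure_prodMk_left (hSmeas k i))]
      set D := EMetric.diam (T k i) with hDdef
      set c : ℝ≥0∞ := (2 * D) ^ m * (ENNReal.ofReal (2 * R)) ^ (2 * n - m) with hcdef
      have hsec : (∫⁻ x, ν' (Prod.mk x ⁻¹' S k i))
          = ∫⁻ P, volume ((fun x => (x, P)) ⁻¹' S k i) ∂ν' := by
        rw [← Measure.prod_apply (hSmeas k i), Measure.prod_apply_symm (hSmeas k i)]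
      have hvol_le : ∀ P ∈ grass n m, volume ((fun x : E n => (x, P)) ⁻¹' S k i) ≤ c := by
        rintro P ⟨V, -, hVrank, rfl⟩
        exact vol_bound V hVrank hm2n (T k i) (hTdne k i)
      have hmeasvol : Measurable fun P : E n →L[ℝ] E n =>
          volume ((fun x : E n => (x, P)) ⁻¹' S k i) :=
        measurable_measure_prodMk_right (hSmeas k i)
      have hae : ∀ᵐ P ∂ν', volume ((fun x : E n => (x, P)) ⁻¹' S k i) ≤ c := by
        rw [ae_iff]
        have hbadmeas : MeasurableSet
            {P : E n →L[ℝ] E n | ¬ volume ((fun x : E n => (x, P)) ⁻¹' S k i) ≤ c} := by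
          simp only [not_le]
          exact measurableSet_lt measurable_const hmeasvol
        rw [hν'def, Measure.restrict_apply hbadmeas]
        have hempty : {P : E n →L[ℝ] E n | ¬ volume ((fun x : E n => (x, P)) ⁻¹' S k i) ≤ c}
            ∩ grass n m = ∅ := by
          rw [Set.eq_empty_iff_forall_notMem]
          rintro P ⟨hbad, hPg⟩
          exact hbad (hvol_le P hPg)
        rw [hempty, measure_empty]
      have hν'univ : ν' Set.univ = 1 := by
        rw [hν'def, Measure.restrict_apply MeasurableSet.univ, Set.univ_inter]
        exact hν.1
      have hint_le : (∫⁻ P, volume ((fun x : E n => (x, P)) ⁻¹' S k i) ∂ν') ≤ c := by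
        refine le_trans (lintegral_mono_ae hae) ?_
        rw [lintegral_const, hν'univ, mul_one]
      have hwc : w k i * c ≤ K * ⨆ _ : (T k i).Nonempty, D ^ s := by
        rcases eq_or_ne D 0 with hD0 | hD0
        · rw [hcdef, hD0, mul_zero, zero_pow (by omega : m ≠ 0), zero_mul, mul_zero]
          exact zero_le
        · have hDnet : D ≠ ∞ := hTdne k i
          have hTne : (T k i).Nonempty := by
            rw [Set.nonempty_iff_ne_empty]
            intro h
            exact hD0 (by rw [hDdef, h]; exact Metric.ediam_empty)
          rw [iSup_pos hTne]
          have hrng : w k i * c = K * (D ^ (s - (m:ℝ)) * D ^ (m:ℕ)) := by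
            rw [hwdef, hcdef, hKdef, mul_pow]; ring
          rw [hrng]
          refine mul_le_mul_right (le_of_eq ?_) K
          rw [← ENNReal.rpow_natCast D m, ← ENNReal.rpow_add _ _ hD0 hDnet, sub_add_cancel]
      calc w k i * (∫⁻ x, ν' (Prod.mk x ⁻¹' S k i))
          ≤ w k i * c := by rw [hsec]; exact mul_le_mul_right hint_le _
        _ ≤ K * ⨆ _ : (T k i).Nonempty, D ^ s := hwc
    refine le_trans (ENNReal.tsum_le_tsum per_i) ?_
    rw [ENNReal.tsum_mul_left]
    exact mul_le_mul_right (hTsum k) K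
  have hGmeas : ∀ k, Measurable fun x : E n => ∑' i, w k i * ν' (Prod.mk x ⁻¹' S k i) :=
    fun k => Measurable.ennreal_tsum fun i =>
      (measurable_measure_prodMk_left (hSmeas k i)).const_mul _
  have hlim : Tendsto (fun k : ℕ => K * (H + ((k : ℝ≥0∞) + 1)⁻¹)) atTop (𝓝 (K * H)) := by
    have h0 : Tendsto (fun k : ℕ => ((k : ℝ≥0∞) + 1)⁻¹) atTop (𝓝 0) := by
      have h1 := ENNReal.tendsto_inv_nat_nhds_zero.comp (tendsto_add_atTop_nat 1)
      refine h1.congr fun k => ?_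
      simp [Function.comp, Nat.cast_add]
    have h1 : Tendsto (fun k : ℕ => H + ((k : ℝ≥0∞) + 1)⁻¹) atTop (𝓝 (H + 0)) :=
      tendsto_const_nhds.add h0
    rw [add_zero] at h1
    exact ENNReal.Tendsto.const_mul h1 (Or.inr hKne)
  calc ∫⁻ x, (∫⁻ P in grass n m,
          (if Metric.infDist x (LinearMap.range (P : E n →ₗ[ℝ] E n) : Set (E n)) ≤ R then
            μH[s - m] (A ∩ {y : E n | y - x ∈ (LinearMap.range (P : E n →ₗ[ℝ] E n))ᗮ}) else 0) ∂ν)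
      ≤ ∫⁻ x, liminf (fun k => ∑' i, w k i * ν' (Prod.mk x ⁻¹' S k i)) atTop :=
        lintegral_mono fun x => (step1 x).trans (step2 x)
    _ ≤ liminf (fun k => ∫⁻ x, ∑' i, w k i * ν' (Prod.mk x ⁻¹' S k i)) atTop :=
        lintegral_liminf_le hGmeas
    _ ≤ liminf (fun k : ℕ => K * (H + ((k : ℝ≥0∞) + 1)⁻¹)) atTop :=
        Filter.liminf_le_liminf (Filter.Eventually.of_forall boundk)
    _ = K * H := hlim.liminf_eq
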